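/- Let |α_τ| < α_0, where |α_τ| := min_{0<μ<N} |α_μ|, and fix τ with |α_τ| = min_{0<μ<N} |α_μ|. Then the collinear configuration Ψ_{↑…↓} defined by ψ_τ = π and ψ_μ = 0 for μ ≠ τ has strictly lower energy than every collinear configuration (each ψ_μ ∈ {0, π}) that is not of the form ψ_ν = π for a single index ν with |α_ν| = |α_τ| and ψ_μ = 0 for μ ≠ ν. -/

import Mathlib

open Real Finset

/-- The energy of an `N`-spin polygon in the angle representation. -/
noncomputable def polygonEnergy (N : ℕ) (α ψ : ℕ → ℝ) : ℝ :=
  α 0 * Real.cos (∑ μ ∈ Finset.Ico 1 N, ψ μ) +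
    ∑ μ ∈ Finset.Ico 1 N, α μ * Real.cos (ψ μ)

lemma cos_nat_mul_pi' (n : ℕ) : Real.cos (n * π) = (-1 : ℝ) ^ n := by
  have := Real.cos_nat_mul_pi_sub 0 n
  simpa using this

/-- Energy of a collinear configuration. -/
lemma energy_collinear (N : ℕ) (α φ : ℕ → ℝ)
    (hφ : ∀ μ ∈ Finset.Ico 1 N, φ μ = 0 ∨ φ μ = π) :
    polygonEnergy N α φ =
      α 0 * (-1 : ℝ) ^ ((Finset.Ico 1 N).filter (fun μ => φ μ = π)).card
        + ∑ μ ∈ Finset.Ico 1 N, α μ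
        - 2 * ∑ μ ∈ (Finset.Ico 1 N).filter (fun μ => φ μ = π), α μ := by
  set s := Finset.Ico 1 N
  set S := s.filter (fun μ => φ μ = π) with hS
  have hsum : ∑ μ ∈ s, φ μ = (S.card : ℝ) * π := by
    rw [← Finset.sum_filter_add_sum_filter_not s (fun μ => φ μ = π)]
    have h1 : ∑ μ ∈ S, φ μ = (S.card : ℝ) * π := by
      rw [Finset.sum_congr rfl (fun μ hμ => (Finset.mem_filter.mp hμ).2)]
      simp [mul_comm]
      rfl
    have h2 : ∑ μ ∈ s.filter (fun μ => ¬ φ μ = π), φ μ = 0 := by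
      apply Finset.sum_eq_zero
      intro μ hμ
      rcases Finset.mem_filter.mp hμ with ⟨hμs, hμn⟩
      rcases hφ μ hμs with h | h
      · exact h
      · exact absurd h hμn
    rw [h1, h2, add_zero]
  have hterm : ∑ μ ∈ s, α μ * Real.cos (φ μ)
      = ∑ μ ∈ s, α μ - 2 * ∑ μ ∈ S, α μ := by
    rw [← Finset.sum_filter_add_sum_filter_not s (fun μ => φ μ = π) (fun μ => α μ * Real.cos (φ μ)),
        ← Finset.sum_filter_add_sum_filter_not s (fun μ => φ μ = π) (fun μ => α μ)]
    have h1 : ∑ μ ∈ S, α μ * Real.cos (φ μ) = ∑ μ ∈ S, -α μ := by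
      apply Finset.sum_congr rfl
      intro μ hμ
      rw [(Finset.mem_filter.mp hμ).2, Real.cos_pi]; ring
    have h2 : ∑ μ ∈ s.filter (fun μ => ¬ φ μ = π), α μ * Real.cos (φ μ)
        = ∑ μ ∈ s.filter (fun μ => ¬ φ μ = π), α μ := by
      apply Finset.sum_congr rfl
      intro μ hμ
      rcases Finset.mem_filter.mp hμ with ⟨hμs, hμn⟩
      rcases hφ μ hμs with h | h
      · rw [h, Real.cos_zero, mul_one]
      · exact absurd h hμn
    rw [h1, h2, Finset.sum_neg_distrib]
    ring
  unfold polygonEnergy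
  rw [hsum, cos_nat_mul_pi', hterm]
  ring

/-- In the complementary domain `|α_τ| < α₀` the collinear configuration `Ψ_{↑…↓}`
(`ψ_τ = π`, all other `ψ_μ = 0`) has strictly lower energy than every collinear
configuration not of the form "`ψ_ν = π` for a single index `ν` of minimal
ferromagnetic strength, `ψ_μ = 0` otherwise". -/
theorem updown_state_min_among_collinear (N : ℕ) (hN : 2 < N) (α : ℕ → ℝ)
    (hα0 : 0 < α 0) (hαμ : ∀ μ ∈ Finset.Ico 1 N, α μ < 0)
    (τ : ℕ) (hτ : τ ∈ Finset.Ico 1 N)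
    (hτmin : ∀ μ ∈ Finset.Ico 1 N, |α τ| ≤ |α μ|)
    (hdom : |α τ| < α 0) :
    ∀ φ : ℕ → ℝ, (∀ μ ∈ Finset.Ico 1 N, φ μ = 0 ∨ φ μ = π) →
      ¬ (∃ ν ∈ Finset.Ico 1 N, |α ν| = |α τ| ∧
          ∀ μ ∈ Finset.Ico 1 N, φ μ = if μ = ν then π else 0) →
      polygonEnergy N α (fun μ => if μ = τ then π else 0) < polygonEnergy N α φ := by
  intro φ hφ hnot
  set s := Finset.Ico 1 N with hs
  have hπne : (π : ℝ) ≠ 0 := Real.pi_ne_zero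
  -- energy of the up-down state
  have hudcol : ∀ μ ∈ s, (if μ = τ then π else (0:ℝ)) = 0 ∨ (if μ = τ then π else (0:ℝ)) = π := by
    intro μ _; by_cases h : μ = τ <;> simp [h]
  have hudfilter : s.filter (fun μ => (if μ = τ then π else (0:ℝ)) = π) = {τ} := by
    ext μ
    simp only [Finset.mem_filter, Finset.mem_singleton]
    constructor
    · rintro ⟨hμs, h⟩
      by_contra hne
      rw [if_neg hne] at h
      exact hπne h.symm
    · rintro rfl
      exact ⟨hτ, by simp⟩
  have hEud := energy_collinear N α (fun μ => if μ = τ then π else 0) hudcol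
  rw [hudfilter] at hEud
  simp only [Finset.card_singleton, pow_one, Finset.sum_singleton] at hEud
  -- energy of φ
  set S := s.filter (fun μ => φ μ = π) with hSdef
  have hEφ := energy_collinear N α φ hφ
  -- key inequality
  have habs : ∀ μ ∈ S, |α τ| ≤ -α μ := by
    intro μ hμ
    have hμs := Finset.mem_of_mem_filter μ hμ
    have := hτmin μ hμs
    rwa [abs_of_neg (hαμ μ hμs)] at this
  have hsumS : (S.card : ℝ) * |α τ| ≤ ∑ μ ∈ S, -α μ := by
    have := Finset.card_nsmul_le_sum S (fun μ => -α μ) (|α τ|) habs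
    simpa [nsmul_eq_mul] using this
  have hτpos : 0 < |α τ| := abs_pos.mpr (ne_of_lt (hαμ τ hτ))
  have hατ : -α τ = |α τ| := (abs_of_neg (hαμ τ hτ)).symm
  rw [hEud, hEφ]
  have key : -α 0 + 2 * |α τ| < α 0 * (-1 : ℝ) ^ S.card + 2 * ∑ μ ∈ S, -α μ := by
    rcases Nat.even_or_odd S.card with he | ho
    · rw [he.neg_one_pow]
      have h0 : (0:ℝ) ≤ ∑ μ ∈ S, -α μ := le_trans (by positivity) hsumS
      nlinarith
    · rw [ho.neg_one_pow]
      rcases eq_or_ne S.card 1 with hc1 | hcne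
      · -- single flipped spin at ν
        obtain ⟨ν, hν⟩ := Finset.card_eq_one.mp hc1
        have hνS : ν ∈ S := by rw [hν]; exact Finset.mem_singleton_self ν
        have hνs : ν ∈ s := Finset.mem_of_mem_filter ν hνS
        have hne : |α ν| ≠ |α τ| := by
          intro heq
          apply hnot
          refine ⟨ν, hνs, heq, ?_⟩
          intro μ hμs
          by_cases hμν : μ = ν
          · rw [if_pos hμν, hμν]
            exact (Finset.mem_filter.mp hνS).2
          · rw [if_neg hμν]
            rcases hφ μ hμs with h | h
            · exact h
            · exfalso
              apply hμν
              have : μ ∈ S := Finset.mem_filter.mpr ⟨hμs, h⟩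
              rw [hν] at this
              exact Finset.mem_singleton.mp this
        have hlt : |α τ| < |α ν| := lt_of_le_of_ne (hτmin ν hνs) (Ne.symm hne)
        have hsum : ∑ μ ∈ S, -α μ = |α ν| := by
          rw [hν, Finset.sum_singleton, abs_of_neg (hαμ ν hνs)]
        rw [hsum]
        linarith
      · -- at least three flipped spins
        have h3 : 3 ≤ S.card := by
          rcases ho with ⟨k, hk⟩
          omega
        have : (3:ℝ) * |α τ| ≤ ∑ μ ∈ S, -α μ := by
          have h3' : (3:ℝ) ≤ (S.card : ℝ) := by exact_mod_cast h3
          nlinarith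
        linarith
  have hsum2 : ∑ μ ∈ S, α μ = -∑ μ ∈ S, -α μ := by simp
  rw [hsum2]
  linarith [key]
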